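/- For every point y in the union of cluster tori X'_F(m) (sequences in P¹(F) with y_0=[1:0], y_m=[0:1], consecutive entries distinct, and not the alternating [1:0],[0:1] sequence), there exists a triangulation T of the (m+1)-gon such that y_i ≠ y_j for every diagonal ij ∈ T. -/

import Mathlib

/-- The projective line over a field `F`. -/
abbrev P1 (F : Type*) [Field F] := Projectivization F (F × F)

/-- The point `[1:0]` of the projective line. -/
noncomputable def ptZero (F : Type*) [Field F] : P1 F :=
  Projectivization.mk F (1, 0) (fun h => one_ne_zero (congrArg Prod.fst h))

/-- The point `[0:1]` of the projective line. -/
noncomputable def ptInf (F : Type*) [Field F] : P1 F :=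
  Projectivization.mk F (0, 1) (fun h => one_ne_zero (congrArg Prod.snd h))

/-- The point `[1:1]` of the projective line. -/
noncomputable def ptOne (F : Type*) [Field F] : P1 F :=
  Projectivization.mk F (1, 1) (fun h => one_ne_zero (congrArg Prod.fst h))

/-- `p = (i, j)` is a diagonal of the convex `(m+1)`-gon with vertices `0, …, m`:
`i < j`, the two vertices are not consecutive, and `(0, m)` is excluded (it is a side). -/
def IsDiag (m : ℕ) (p : ℕ × ℕ) : Prop :=
  p.1 + 2 ≤ p.2 ∧ p.2 ≤ m ∧ ¬(p.1 = 0 ∧ p.2 = m)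

instance (m : ℕ) (p : ℕ × ℕ) : Decidable (IsDiag m p) := by unfold IsDiag; infer_instance

/-- The type of diagonals of the convex `(m+1)`-gon. -/
abbrev Diagonal (m : ℕ) := {p : ℕ × ℕ // IsDiag m p}

/-- Two diagonals cross in the interior of the polygon. -/
def Crossing {m : ℕ} (d e : Diagonal m) : Prop :=
  (d.val.1 < e.val.1 ∧ e.val.1 < d.val.2 ∧ d.val.2 < e.val.2) ∨
  (e.val.1 < d.val.1 ∧ d.val.1 < e.val.2 ∧ e.val.2 < d.val.2)

/-- A triangulation of the convex `(m+1)`-gon: a maximal set of pairwise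
non-crossing diagonals (maximality = having `(m+1) - 3` diagonals). -/
structure Triangulation (m : ℕ) where
  diags : Finset (Diagonal m)
  noncross : ∀ d ∈ diags, ∀ e ∈ diags, ¬ Crossing d e
  card_eq : diags.card = m - 2

/-- `y` takes distinct values on the endpoints of every diagonal of `T`
(i.e. `y` lies in the cluster torus of `T`). -/
def ProperDiags {F : Type*} [Field F] {m : ℕ} (T : Triangulation m) (y : ℕ → P1 F) : Prop :=
  ∀ d ∈ T.diags, y d.val.1 ≠ y d.val.2

/-- `c` is a proper coloring of the full graph of the triangulation `T`
(sides of the polygon together with the diagonals of `T`). -/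
def ProperGraph {F : Type*} [Field F] {m : ℕ} (T : Triangulation m) (c : ℕ → P1 F) : Prop :=
  (∀ i < m, c i ≠ c (i + 1)) ∧ c m ≠ c 0 ∧ ProperDiags T c

/-- `y` is a point of `X_F(m)`: `y 0 = [1:0]`, `y m = [0:1]`, consecutive entries distinct. -/
def XCond (F : Type*) [Field F] (m : ℕ) (y : ℕ → P1 F) : Prop :=
  y 0 = ptZero F ∧ y m = ptInf F ∧ ∀ i < m, y i ≠ y (i + 1)

/-- `y` is the alternating sequence `([1:0], [0:1], [1:0], …)` on `0, …, m`. -/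
def IsAltSeq (F : Type*) [Field F] (m : ℕ) (y : ℕ → P1 F) : Prop :=
  ∀ i ≤ m, y i = if i % 2 = 0 then ptZero F else ptInf F

/-- The diagonal `d` is valid for the point `y`: its endpoints have distinct labels and
on each of the two sub-polygons determined by `d` the labels take at least three values. -/
def ValidDiag (F : Type*) [Field F] (m : ℕ) (y : ℕ → P1 F) (d : Diagonal m) : Prop :=
  y d.val.1 ≠ y d.val.2 ∧
  3 ≤ (y '' (Set.Icc d.val.1 d.val.2)).ncard ∧
  3 ≤ (y '' (Set.Icc 0 d.val.1 ∪ Set.Icc d.val.2 m)).ncard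

/-- `T'` is obtained from `T` by removing the diagonals `old` and adding the diagonals `new`. -/
def SwapMove {m : ℕ} (T T' : Triangulation m) (old new : Finset (Diagonal m)) : Prop :=
  old ⊆ T.diags ∧ T'.diags = (T.diags \ old) ∪ new

/-- Zig-zag hexagonal move: inside a hexagonal sub-polygon with vertices
`v 0 < ⋯ < v 5`, replace the zig-zag `{15, 35, 36}` by the zig-zag `{24, 26, 46}`
(in the labels `1, …, 6` of the hexagon). -/
def ZigZagMoveOne {m : ℕ} (T T' : Triangulation m) : Prop :=
  ∃ v : Fin 6 → ℕ, StrictMono v ∧ v 5 ≤ m ∧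
    ∃ (h1 : IsDiag m (v 0, v 4)) (h2 : IsDiag m (v 2, v 4)) (h3 : IsDiag m (v 2, v 5))
      (h4 : IsDiag m (v 1, v 3)) (h5 : IsDiag m (v 1, v 5)) (h6 : IsDiag m (v 3, v 5)),
      SwapMove T T' {⟨(v 0, v 4), h1⟩, ⟨(v 2, v 4), h2⟩, ⟨(v 2, v 5), h3⟩}
        {⟨(v 1, v 3), h4⟩, ⟨(v 1, v 5), h5⟩, ⟨(v 3, v 5), h6⟩}

/-- Inscribed-triangle hexagonal move: inside a hexagonal sub-polygon with vertices
`v 0 < ⋯ < v 5`, replace the inscribed triangle `{13, 35, 51}` by `{24, 46, 62}`. -/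
def InscribedMoveOne {m : ℕ} (T T' : Triangulation m) : Prop :=
  ∃ v : Fin 6 → ℕ, StrictMono v ∧ v 5 ≤ m ∧
    ∃ (h1 : IsDiag m (v 0, v 2)) (h2 : IsDiag m (v 2, v 4)) (h3 : IsDiag m (v 0, v 4))
      (h4 : IsDiag m (v 1, v 3)) (h5 : IsDiag m (v 3, v 5)) (h6 : IsDiag m (v 1, v 5)),
      SwapMove T T' {⟨(v 0, v 2), h1⟩, ⟨(v 2, v 4), h2⟩, ⟨(v 0, v 4), h3⟩}
        {⟨(v 1, v 3), h4⟩, ⟨(v 3, v 5), h5⟩, ⟨(v 1, v 5), h6⟩}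

/-- A hexagonal move (in either direction). -/
def HexMove {m : ℕ} (T T' : Triangulation m) : Prop :=
  ZigZagMoveOne T T' ∨ ZigZagMoveOne T' T ∨ InscribedMoveOne T T' ∨ InscribedMoveOne T' T


section ClusterAux

variable {F : Type*} [Field F]

/-- Delete the entry at position `k` from a sequence. -/
def delSeq (k : ℕ) (y : ℕ → P1 F) : ℕ → P1 F := fun i => if i < k then y i else y (i + 1)

/-- The vertex reindexing map skipping the value `k`. -/
def phiMap (k : ℕ) : ℕ → ℕ := fun i => if i < k then i else i + 1

lemma phiMap_lt_iff (k a b : ℕ) : phiMap k a < phiMap k b ↔ a < b := by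
  unfold phiMap; split_ifs <;> omega

lemma phiMap_inj {k a b : ℕ} (h : phiMap k a = phiMap k b) : a = b := by
  unfold phiMap at h; split_ifs at h <;> omega

lemma phiMap_ne (k i : ℕ) : phiMap k i ≠ k := by unfold phiMap; split_ifs <;> omega

lemma delSeq_eq (k : ℕ) (y : ℕ → P1 F) (i : ℕ) : delSeq k y i = y (phiMap k i) := by
  unfold delSeq phiMap; split_ifs <;> rfl

lemma delSeq_lt (k : ℕ) (y : ℕ → P1 F) {i : ℕ} (h : i < k) : delSeq k y i = y i := by
  simp [delSeq, h]

lemma delSeq_ge (k : ℕ) (y : ℕ → P1 F) {i : ℕ} (h : k ≤ i) : delSeq k y i = y (i + 1) := by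
  simp [delSeq, Nat.not_lt.mpr h]

lemma reindexTri (m k : ℕ) (hm : 3 ≤ m) (hk : k + 2 ≤ m) (y : ℕ → P1 F)
    (hear : y k ≠ y (k + 2)) (T' : Triangulation (m - 1))
    (hT' : ProperDiags T' (delSeq (k + 1) y)) : ∃ T : Triangulation m, ProperDiags T y := by
  classical
  have hdiag : ∀ d : Diagonal (m - 1), IsDiag m (phiMap (k+1) d.val.1, phiMap (k+1) d.val.2) := by
    intro d
    have h := d.2
    unfold IsDiag at h ⊢
    unfold phiMap
    split_ifs <;> simp only [false_and, not_false_eq_true, and_true] <;> omega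
  set f : Diagonal (m - 1) → Diagonal m :=
    fun d => ⟨(phiMap (k+1) d.val.1, phiMap (k+1) d.val.2), hdiag d⟩ with hf
  have hnew : IsDiag m (k, k + 2) := by unfold IsDiag; omega
  set D : Finset (Diagonal m) := insert ⟨(k, k+2), hnew⟩ (T'.diags.image f) with hD
  have hmemD : ∀ d ∈ D, d = (⟨(k, k+2), hnew⟩ : Diagonal m) ∨ ∃ e ∈ T'.diags, d = f e := by
    intro d hd
    rcases Finset.mem_insert.mp hd with h | h
    · exact Or.inl h
    · obtain ⟨e, he, hfe⟩ := Finset.mem_image.mp h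
      exact Or.inr ⟨e, he, hfe.symm⟩
  have hfinj : Function.Injective f := by
    intro a b hab
    have h1 : phiMap (k+1) a.val.1 = phiMap (k+1) b.val.1 := congrArg (fun d => d.val.1) hab
    have h2 : phiMap (k+1) a.val.2 = phiMap (k+1) b.val.2 := congrArg (fun d => d.val.2) hab
    exact Subtype.ext (Prod.ext (phiMap_inj h1) (phiMap_inj h2))
  have hnotmem : (⟨(k, k+2), hnew⟩ : Diagonal m) ∉ T'.diags.image f := by
    intro h
    obtain ⟨e, he, hfe⟩ := Finset.mem_image.mp h
    have h1 : phiMap (k+1) e.val.1 = k := congrArg (fun d => d.val.1) hfe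
    have h2 : phiMap (k+1) e.val.2 = k + 2 := congrArg (fun d => d.val.2) hfe
    have h3 := e.2
    unfold IsDiag at h3
    unfold phiMap at h1 h2
    split_ifs at h1 h2 <;> omega
  refine ⟨⟨D, ?_, ?_⟩, ?_⟩
  · intro d hd e he hcr
    rcases hmemD d hd with rfl | ⟨a, ha, rfl⟩ <;> rcases hmemD e he with rfl | ⟨b, hb, rfl⟩ <;>
      simp only [Crossing, hf] at hcr
    · omega
    · rcases hcr with ⟨h1, h2, h3⟩ | ⟨h1, h2, h3⟩
      · exact phiMap_ne (k+1) b.val.1 (by omega)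
      · exact phiMap_ne (k+1) b.val.2 (by omega)
    · rcases hcr with ⟨h1, h2, h3⟩ | ⟨h1, h2, h3⟩
      · exact phiMap_ne (k+1) a.val.2 (by omega)
      · exact phiMap_ne (k+1) a.val.1 (by omega)
    · refine T'.noncross a ha b hb ?_
      rcases hcr with ⟨h1, h2, h3⟩ | ⟨h1, h2, h3⟩
      · exact Or.inl ⟨(phiMap_lt_iff _ _ _).mp h1, (phiMap_lt_iff _ _ _).mp h2,
          (phiMap_lt_iff _ _ _).mp h3⟩
      · exact Or.inr ⟨(phiMap_lt_iff _ _ _).mp h1, (phiMap_lt_iff _ _ _).mp h2,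
          (phiMap_lt_iff _ _ _).mp h3⟩
  · rw [hD, Finset.card_insert_of_notMem hnotmem,
      Finset.card_image_of_injective _ hfinj, T'.card_eq]
    omega
  · intro d hd
    rcases hmemD d hd with rfl | ⟨a, ha, rfl⟩
    · exact hear
    · have h := hT' a ha
      rw [delSeq_eq, delSeq_eq] at h
      exact h

lemma earChoice (m : ℕ) (y : ℕ → P1 F) (hc : ∀ i < m, y i ≠ y (i + 1))
    (i₀ : ℕ) (hi : i₀ + 2 ≤ m) (hne : y i₀ ≠ y (i₀ + 2)) :
    ∃ k, k + 2 ≤ m ∧ y k ≠ y (k + 2) ∧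
      (m ≤ 3 ∨ ∃ i, i + 3 ≤ m ∧ delSeq (k + 1) y i ≠ delSeq (k + 1) y (i + 2)) := by
  by_cases hm3 : m ≤ 3
  · exact ⟨i₀, hi, hne, Or.inl hm3⟩
  push_neg at hm3
  by_cases hz : ∃ i, i + 3 ≤ m ∧ delSeq (i₀ + 1) y i ≠ delSeq (i₀ + 1) y (i + 2)
  · exact ⟨i₀, hi, hne, Or.inr hz⟩
  push_neg at hz
  rcases Nat.lt_or_ge i₀ 2 with h2 | h2
  · rcases Nat.lt_or_ge m (i₀ + 4) with h4 | h4
    · -- i₀ = 1, m = 4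
      have hi1 : i₀ = 1 := by omega
      have hm4 : m = 4 := by omega
      subst hi1; subst hm4
      have e1 : y 0 = y 3 := by
        have := hz 0 (by omega)
        rwa [delSeq_lt _ _ (by omega), delSeq_ge _ _ (by omega)] at this
      have e2 : y 1 = y 4 := by
        have := hz 1 (by omega)
        rwa [delSeq_lt _ _ (by omega), delSeq_ge _ _ (by omega)] at this
      refine ⟨0, by omega, ?_, Or.inr ⟨1, by omega, ?_⟩⟩
      · rw [e1]; exact (hc 2 (by omega)).symm
      · rw [delSeq_ge _ _ (by omega), delSeq_ge _ _ (by omega), ← e2]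
        exact (hc 1 (by omega)).symm
    · -- k = i₀ + 1
      have e1 : y i₀ = y (i₀ + 3) := by
        have := hz i₀ (by omega)
        rwa [delSeq_lt _ _ (by omega), delSeq_ge _ _ (by omega)] at this
      have e2 : y (i₀ + 2) = y (i₀ + 4) := by
        have := hz (i₀ + 1) (by omega)
        rwa [delSeq_ge _ _ (by omega), delSeq_ge _ _ (by omega)] at this
      refine ⟨i₀ + 1, by omega, ?_, Or.inr ⟨i₀ + 1, by omega, ?_⟩⟩
      · rw [← e1]; exact (hc i₀ (by omega)).symm
      · rw [delSeq_lt _ _ (by omega), delSeq_ge _ _ (by omega), ← e2]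
        exact hc (i₀ + 1) (by omega)
  · -- i₀ ≥ 2, k = i₀ - 1
    obtain ⟨j, rfl⟩ : ∃ j, i₀ = j + 2 := ⟨i₀ - 2, by omega⟩
    have e1 : y (j + 1) = y (j + 4) := by
      have := hz (j + 1) (by omega)
      rwa [delSeq_lt _ _ (by omega), delSeq_ge _ _ (by omega)] at this
    have e2 : y j = y (j + 2) := by
      have := hz j (by omega)
      rwa [delSeq_lt _ _ (by omega), delSeq_lt _ _ (by omega)] at this
    refine ⟨j + 1, by omega, ?_, Or.inr ⟨j, by omega, ?_⟩⟩
    · rw [e1]; exact (hc (j + 3) (by omega)).symm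
    · rw [delSeq_lt _ _ (by omega), delSeq_ge _ _ (by omega), e2]
      exact hc (j + 2) (by omega)

lemma keyTri : ∀ m : ℕ, ∀ y : ℕ → P1 F, (∀ i < m, y i ≠ y (i + 1)) →
    (m ≤ 2 ∨ ∃ i, i + 2 ≤ m ∧ y i ≠ y (i + 2)) →
    ∃ T : Triangulation m, ProperDiags T y := by
  intro m
  induction m using Nat.strong_induction_on with
  | _ m ih =>
    intro y hc hw
    by_cases hm2 : m ≤ 2
    · refine ⟨⟨∅, ?_, ?_⟩, ?_⟩
      · intro d hd; simp at hd
      · simp only [Finset.card_empty]; omega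
      · intro d hd; simp at hd
    · push_neg at hm2
      rcases hw with h | ⟨i₀, hi, hne⟩
      · omega
      obtain ⟨k, hk2, hear, hrest⟩ := earChoice m y hc i₀ hi hne
      have hc' : ∀ i < m - 1, delSeq (k + 1) y i ≠ delSeq (k + 1) y (i + 1) := by
        intro i hi'
        rcases Nat.lt_or_ge (i + 1) (k + 1) with h | h
        · rw [delSeq_lt _ _ (by omega), delSeq_lt _ _ h]
          exact hc i (by omega)
        · rcases Nat.lt_or_ge i (k + 1) with h' | h'
          · have hik : i = k := by omega
            rw [delSeq_lt _ _ h', delSeq_ge _ _ h, hik]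
            exact hear
          · rw [delSeq_ge _ _ h', delSeq_ge _ _ (by omega)]
            exact hc (i + 1) (by omega)
      have hw' : (m - 1 ≤ 2) ∨ ∃ i, i + 2 ≤ m - 1 ∧
          delSeq (k + 1) y i ≠ delSeq (k + 1) y (i + 2) := by
        rcases hrest with h | ⟨i, hi3, hne'⟩
        · left; omega
        · right; exact ⟨i, by omega, hne'⟩
      obtain ⟨T', hT'⟩ := ih (m - 1) (by omega) _ hc' hw'
      exact reindexTri m k (by omega) hk2 y hear T' hT'

end ClusterAux

theorem stmt13 (F : Type*) [Field F] (m : ℕ) (y : ℕ → P1 F)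
    (hy : XCond F m y) (halt : ¬ IsAltSeq F m y) :
    ∃ T : Triangulation m, ProperDiags T y := by
  obtain ⟨h0, hm, hc⟩ := hy
  have hZI : ptZero F ≠ ptInf F := by
    intro h
    rw [ptZero, ptInf, Projectivization.mk_eq_mk_iff] at h
    obtain ⟨a, ha⟩ := h
    have := congrArg Prod.fst ha
    simp [Prod.smul_def] at this
  by_cases h3 : m ≤ 2
  · exact keyTri m y hc (Or.inl h3)
  · push_neg at h3
    refine keyTri m y hc (Or.inr ?_)
    by_contra hcon
    push_neg at hcon
    apply halt
    have hp : ∀ i ≤ m, y i = if i % 2 = 0 then y 0 else y 1 := by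
      intro i
      induction i using Nat.strong_induction_on with
      | _ i ih =>
        intro hi
        rcases Nat.lt_or_ge i 2 with h | h
        · interval_cases i <;> simp
        · obtain ⟨j, rfl⟩ : ∃ j, i = j + 2 := ⟨i - 2, by omega⟩
          rw [← hcon j (by omega), ih j (by omega) (by omega)]
          have hmod : (j + 2) % 2 = j % 2 := by omega
          rw [hmod]
    have h1 : y 1 = ptInf F := by
      have hpm := hp m le_rfl
      rcases Nat.mod_two_eq_zero_or_one m with he | ho
      · rw [he] at hpm
        simp only [if_true] at hpm
        rw [hm, h0] at hpm
        exact absurd hpm.symm hZI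
      · rw [ho] at hpm
        simp only [one_ne_zero, if_false] at hpm
        rw [hm] at hpm
        exact hpm.symm
    intro i hi
    rw [hp i hi, h0, h1]
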